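/- Let L be a recognizable subset and K a rational subset of a monoid M. Then L ∩ K is a rational subset of M. -/

import Mathlib

open Pointwise
/-- The rational subsets of a monoid `M`: the smallest family of subsets
containing all finite subsets and closed under union, product, and Kleene star
(the submonoid generated by a set). -/
inductive IsRat {M : Type*} [Monoid M] : Set M → Prop
  | finite (S : Set M) : S.Finite → IsRat S
  | union {S T : Set M} : IsRat S → IsRat T → IsRat (S ∪ T)
  | mul {S T : Set M} : IsRat S → IsRat T → IsRat (S * T)
  | star {S : Set M} : IsRat S → IsRat (Submonoid.closure S : Set M)

/-- A subset `L` of a monoid `M` is recognizable if it is saturated by a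
homomorphism to some finite monoid. -/
def IsRec {M : Type*} [Monoid M] (L : Set M) : Prop :=
  ∃ (N : Type) (_ : Monoid N) (_ : Finite N) (φ : M →* N), φ ⁻¹' (φ '' L) = L

namespace RatRecAux

variable {M N : Type*} [Monoid M] [Monoid N]

/-- Walks in the "automaton" with states `N`, reading elements of `S`,
with all intermediate states (strictly between start and end) in `A`. -/
inductive Walk (φ : M →* N) (S : Set M) (A : Set N) : N → N → M → Prop
  | single {p : N} {s : M} : s ∈ S → Walk φ S A p (p * φ s) s
  | cons {p q : N} {s m : M} : s ∈ S → p * φ s ∈ A →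
      Walk φ S A (p * φ s) q m → Walk φ S A p q (s * m)

variable {φ : M →* N} {S : Set M}

def walkSet (φ : M →* N) (S : Set M) (A : Set N) (p q : N) : Set M :=
  {m | Walk φ S A p q m}

def pathSet (φ : M →* N) (S : Set M) (A : Set N) (p q : N) : Set M :=
  {m | (p = q ∧ m = 1) ∨ Walk φ S A p q m}

lemma Walk.state {A : Set N} {p q : N} {m : M} (h : Walk φ S A p q m) :
    p * φ m = q := by
  induction h with
  | single hs => rfl
  | cons hs ha _ ih => rw [map_mul, ← mul_assoc, ih]

lemma Walk.mem_closure {A : Set N} {p q : N} {m : M} (h : Walk φ S A p q m) :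
    m ∈ Submonoid.closure S := by
  induction h with
  | single hs => exact Submonoid.subset_closure hs
  | cons hs _ _ ih => exact mul_mem (Submonoid.subset_closure hs) ih

lemma Walk.mono {A B : Set N} (hAB : A ⊆ B) {p q : N} {m : M}
    (h : Walk φ S A p q m) : Walk φ S B p q m := by
  induction h with
  | single hs => exact .single hs
  | cons hs ha _ ih => exact .cons hs (hAB ha) ih

lemma Walk.append {A : Set N} {p q t : N} {m m' : M} (h : Walk φ S A p q m)
    (hq : q ∈ A) (h' : Walk φ S A q t m') : Walk φ S A p t (m * m') := by
  revert hq h'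
  induction h with
  | single hs => exact fun hq h' => .cons hs hq h'
  | cons hs ha _ ih =>
    intro hq h'
    rw [mul_assoc]
    exact .cons hs ha (ih hq h')

lemma pathSet_append {A : Set N} {p q t : N} {m m' : M} (hq : q ∈ A)
    (h : m ∈ pathSet φ S A p q) (h' : m' ∈ pathSet φ S A q t) :
    m * m' ∈ pathSet φ S A p t := by
  rcases h with ⟨rfl, rfl⟩ | hw
  · rwa [one_mul]
  rcases h' with ⟨rfl, rfl⟩ | hw'
  · rw [mul_one]; exact Or.inr hw
  · exact Or.inr (hw.append hq hw')

lemma walk_insert {A : Set N} {r p q : N} {m : M}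
    (h : Walk φ S (insert r A) p q m) :
    Walk φ S A p q m ∨
      m ∈ walkSet φ S A p r * (Submonoid.closure (walkSet φ S A r r) : Set M)
        * pathSet φ S A r q := by
  induction h with
  | single hs => exact Or.inl (.single hs)
  | @cons p q s m hs ha _ ih =>
    rcases ha with hr | ha
    · -- p * φ s = r
      right
      have hsW : s ∈ walkSet φ S A p r := hr ▸ Walk.single hs
      rcases ih with hw | hw
      · rw [hr] at hw
        have : s * m = s * 1 * m := by rw [mul_one]
        rw [this]
        exact Set.mul_mem_mul (Set.mul_mem_mul hsW (one_mem _)) (Or.inr hw)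
      · rw [hr] at hw
        obtain ⟨x, hx, m₃, h₃, rfl⟩ := hw
        obtain ⟨m₁, h₁, m₂, h₂, rfl⟩ := hx
        have : s * (m₁ * m₂ * m₃) = s * (m₁ * m₂) * m₃ := by
          simp [mul_assoc]
        rw [this]
        refine Set.mul_mem_mul (Set.mul_mem_mul hsW ?_) h₃
        exact mul_mem (Submonoid.subset_closure h₁) h₂
    · rcases ih with hw | hw
      · exact Or.inl (.cons hs ha hw)
      · right
        obtain ⟨x, hx, m₃, h₃, rfl⟩ := hw
        obtain ⟨m₁, h₁, m₂, h₂, rfl⟩ := hx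
        have : s * (m₁ * m₂ * m₃) = s * m₁ * m₂ * m₃ := by
          simp [mul_assoc]
        rw [this]
        exact Set.mul_mem_mul (Set.mul_mem_mul (Walk.cons hs ha h₁) h₂) h₃

lemma Walk.append_path {A : Set N} {p q t : N} {m m' : M} (h : Walk φ S A p q m)
    (hq : q ∈ A) (h' : m' ∈ pathSet φ S A q t) : Walk φ S A p t (m * m') := by
  rcases h' with ⟨rfl, rfl⟩ | hw'
  · rwa [mul_one]
  · exact h.append hq hw'

lemma mem_pathSet_insert {A : Set N} {r : N} {m : M}
    (hm : m ∈ (Submonoid.closure (walkSet φ S A r r) : Set M)) :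
    m ∈ pathSet φ S (insert r A) r r := by
  induction hm using Submonoid.closure_induction with
  | mem x hx => exact Or.inr (hx.mono (Set.subset_insert r A))
  | one => exact Or.inl ⟨rfl, rfl⟩
  | mul x y hx hy ihx ihy =>
    exact pathSet_append (Set.mem_insert r A) ihx ihy

lemma walkSet_insert_eq (A : Set N) (r p q : N) :
    walkSet φ S (insert r A) p q =
      walkSet φ S A p q ∪
        walkSet φ S A p r * (Submonoid.closure (walkSet φ S A r r) : Set M)
          * pathSet φ S A r q := by
  ext m
  constructor
  · intro h
    exact walk_insert h
  · rintro (hw | hw)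
    · exact hw.mono (Set.subset_insert r A)
    · obtain ⟨x, hx, m₃, h₃, rfl⟩ := hw
      obtain ⟨m₁, h₁, m₂, h₂, rfl⟩ := hx
      have w1 : Walk φ S (insert r A) p r m₁ := h₁.mono (Set.subset_insert r A)
      have w12 : Walk φ S (insert r A) p r (m₁ * m₂) :=
        w1.append_path (Set.mem_insert r A) (mem_pathSet_insert h₂)
      refine w12.append_path (Set.mem_insert r A) ?_
      rcases h₃ with ⟨h, rfl⟩ | h
      · exact Or.inl ⟨h, rfl⟩
      · exact Or.inr (h.mono (Set.subset_insert r A))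

lemma walkSet_empty (p q : N) :
    walkSet φ S (∅ : Set N) p q = φ ⁻¹' {a | p * a = q} ∩ S := by
  ext m
  constructor
  · intro h
    cases h with
    | single hs => exact ⟨rfl, hs⟩
    | cons _ ha _ => exact absurd ha (Set.notMem_empty _)
  · rintro ⟨h1, h2⟩
    have h := Walk.single (φ := φ) (A := (∅ : Set N)) (p := p) h2
    rwa [show p * φ m = q from h1] at h

lemma isRat_finset_biUnion {ι : Type*} (t : Finset ι) (f : ι → Set M)
    (h : ∀ i ∈ t, IsRat (f i)) : IsRat (⋃ i ∈ t, f i) := by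
  classical
  induction t using Finset.induction_on with
  | empty => simpa using IsRat.finite (∅ : Set M) Set.finite_empty
  | @insert a t ha ih =>
    rw [Finset.set_biUnion_insert]
    exact (h a (Finset.mem_insert_self a t)).union
      (ih fun i hi => h i (Finset.mem_insert_of_mem hi))

lemma isRat_walkSet [Finite N] (hS : ∀ P : Set N, IsRat (φ ⁻¹' P ∩ S))
    (A : Set N) : ∀ p q, IsRat (walkSet φ S A p q) := by
  refine Set.Finite.induction_on
    (motive := fun A _ => ∀ p q, IsRat (walkSet φ S A p q)) A (Set.toFinite A)
    (fun p q => ?_) ?_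
  · rw [walkSet_empty]; exact hS _
  · intro r A' _ _ ih p q
    have hpath : IsRat (pathSet φ S A' r q) := by
      have he : pathSet φ S A' r q =
          {m : M | r = q ∧ m = 1} ∪ walkSet φ S A' r q := rfl
      rw [he]
      refine (IsRat.finite _ ?_).union (ih r q)
      exact Set.Finite.subset (Set.finite_singleton 1)
        (by rintro m ⟨_, rfl⟩; rfl)
    rw [walkSet_insert_eq]
    exact (ih p q).union (((ih p r).mul (IsRat.star (ih r r))).mul hpath)

lemma pathSet_univ_of_mem_closure {m : M} (hm : m ∈ Submonoid.closure S) :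
    ∀ p : N, m ∈ pathSet φ S Set.univ p (p * φ m) := by
  induction hm using Submonoid.closure_induction with
  | mem x hx => exact fun p => Or.inr (Walk.single hx)
  | one => exact fun p => Or.inl ⟨by rw [map_one, mul_one], rfl⟩
  | mul x y hx hy ihx ihy =>
    intro p
    have h := pathSet_append (Set.mem_univ (p * φ x)) (ihx p) (ihy (p * φ x))
    simpa [map_mul, mul_assoc] using h

lemma isRat_preimage_inter_closure [Finite N]
    (hS : ∀ P : Set N, IsRat (φ ⁻¹' P ∩ S)) (P : Set N) :
    IsRat (φ ⁻¹' P ∩ (Submonoid.closure S : Set M)) := by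
  classical
  have : Fintype N := Fintype.ofFinite N
  have heq : φ ⁻¹' P ∩ (Submonoid.closure S : Set M) =
      ⋃ q ∈ (Finset.univ : Finset N),
        (if q ∈ P then pathSet φ S Set.univ 1 q else ∅) := by
    ext m
    simp only [Set.mem_iUnion, Finset.mem_univ, exists_prop, true_and,
      Set.mem_inter_iff, Set.mem_preimage]
    constructor
    · rintro ⟨hP, hm⟩
      refine ⟨φ m, ?_⟩
      rw [if_pos hP]
      have h := pathSet_univ_of_mem_closure (φ := φ) hm 1
      rwa [one_mul] at h
    · rintro ⟨q, hq⟩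
      by_cases hqP : q ∈ P
      · rw [if_pos hqP] at hq
        rcases hq with ⟨h1, rfl⟩ | hw
        · exact ⟨by rw [map_one, h1]; exact hqP, one_mem _⟩
        · have hst := hw.state
          rw [one_mul] at hst
          exact ⟨hst ▸ hqP, hw.mem_closure⟩
      · rw [if_neg hqP] at hq
        exact absurd hq (Set.notMem_empty m)
  rw [heq]
  refine isRat_finset_biUnion _ _ fun q _ => ?_
  split_ifs
  · have he : pathSet φ S (Set.univ : Set N) 1 q =
        {m : M | (1 : N) = q ∧ m = 1} ∪ walkSet φ S Set.univ 1 q := rfl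
    rw [he]
    refine (IsRat.finite _ (Set.Finite.subset (Set.finite_singleton 1)
      (by rintro m ⟨_, rfl⟩; rfl))).union (isRat_walkSet hS Set.univ 1 q)
  · exact IsRat.finite _ Set.finite_empty

lemma isRat_preimage_inter_mul [Finite N] {S T : Set M}
    (hS : ∀ P : Set N, IsRat (φ ⁻¹' P ∩ S))
    (hT : ∀ P : Set N, IsRat (φ ⁻¹' P ∩ T)) (P : Set N) :
    IsRat (φ ⁻¹' P ∩ (S * T)) := by
  classical
  have : Fintype N := Fintype.ofFinite N
  have heq : φ ⁻¹' P ∩ (S * T) =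
      ⋃ ab ∈ (Finset.univ : Finset (N × N)),
        (if ab.1 * ab.2 ∈ P then
          (φ ⁻¹' {ab.1} ∩ S) * (φ ⁻¹' {ab.2} ∩ T) else ∅) := by
    ext m
    simp only [Set.mem_iUnion, Finset.mem_univ, exists_prop, true_and,
      Set.mem_inter_iff, Set.mem_preimage]
    constructor
    · rintro ⟨hP, hm⟩
      rw [Set.mem_mul] at hm
      obtain ⟨s, hs, t, ht, rfl⟩ := hm
      refine ⟨(φ s, φ t), ?_⟩
      rw [if_pos (by rwa [← map_mul])]
      exact Set.mul_mem_mul ⟨rfl, hs⟩ ⟨rfl, ht⟩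
    · rintro ⟨⟨a, b⟩, hab⟩
      by_cases h : a * b ∈ P
      · rw [if_pos h] at hab
        rw [Set.mem_mul] at hab
        obtain ⟨s, ⟨hsa, hs⟩, t, ⟨htb, ht⟩, rfl⟩ := hab
        refine ⟨?_, Set.mul_mem_mul hs ht⟩
        rw [map_mul]
        rw [show φ s = a from hsa, show φ t = b from htb]
        exact h
      · rw [if_neg h] at hab
        exact absurd hab (Set.notMem_empty m)
  rw [heq]
  refine isRat_finset_biUnion _ _ fun ab _ => ?_
  split_ifs
  · exact (hS _).mul (hT _)
  · exact IsRat.finite _ Set.finite_empty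

end RatRecAux

/-- The intersection of a recognizable subset with a rational subset of a
monoid `M` is rational. -/
theorem stmt15 (M : Type) [Monoid M] (L K : Set M) (hL : IsRec L)
    (hK : IsRat K) : IsRat (L ∩ K) := by
  obtain ⟨N, _, _, φ, hφ⟩ := hL
  have key : ∀ P : Set N, IsRat (φ ⁻¹' P ∩ K) := by
    induction hK with
    | finite S hfin => exact fun P => IsRat.finite _ (hfin.inter_of_right _)
    | union hS hT ihS ihT =>
      intro P
      rw [Set.inter_union_distrib_left]
      exact (ihS P).union (ihT P)
    | mul hS hT ihS ihT => exact RatRecAux.isRat_preimage_inter_mul ihS ihT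
    | star hS ih => exact RatRecAux.isRat_preimage_inter_closure ih
  rw [← hφ]
  exact key (φ '' L)
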